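/- Let X be a reflexive Banach space, q ∈ (1,∞), 𝓓 an inclusion-closed collection of families of nonempty bounded subsets of the spaces L^q(Ω,𝓕_τ;X), Φ a mean random dynamical system, and 𝓚 = {K(τ)} ∈ 𝓓 a weakly compact 𝓓-pullback absorbing set for Φ. Define 𝓐(τ) = ⋂_{r ≥ 0} cl_w(⋃_{t ≥ r} φ(t, τ−t)(K(τ−t))) for τ ∈ ℝ. Then 𝓐 is minimal in the following sense: if 𝓒 = {C(τ) : τ ∈ ℝ} ∈ 𝓓 is any family such that each C(τ) is a weakly compact subset of L^q(Ω,𝓕_τ;X) and 𝓒 is 𝓓-pullback weakly attracting for Φ, then 𝓐(τ) ⊆ C(τ) for every τ ∈ ℝ. -/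
import Mathlib


/-!
Weak pullback mean random attractors for mean random dynamical systems
(Proposition 2.5 / main abstract result of the paper).

We work with a complete filtered probability space `(Ω, 𝓕, {𝓕 τ}_{τ ∈ ℝ}, μ)`,
a reflexive Banach space `X` and `q ∈ (1, ∞)`.  The Bochner space
`L^q(Ω, 𝓕_τ; X)` is realized as the subset `measSet μ 𝓕 q τ` of the ambient
space `Lp X q μ` consisting of the (a.e.) `𝓕 τ`-strongly measurable elements;
its weak topology is the topology induced from the weak topology of
`Lp X q μ` (these coincide on a closed subspace by Hahn–Banach).
-/

open MeasureTheory Set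
open scoped ENNReal NNReal

noncomputable section

namespace WeakMeanAttractor

variable {Ω X : Type*}

/-- The realization of `L^q(Ω, 𝓕_τ; X)` inside `Lp X q μ`: the set of elements that are
`μ`-a.e. equal to an `𝓕 τ`-strongly measurable function. -/
def measSet {m0 : MeasurableSpace Ω} [NormedAddCommGroup X] [NormedSpace ℝ X]
    (μ : Measure Ω) (𝓕 : Filtration ℝ m0) (q : ℝ≥0∞) (τ : ℝ) : Set (Lp X q μ) :=
  (lpMeas X ℝ (𝓕 τ) q μ : Set (Lp X q μ))

/-- A subset of `Lp X q μ` viewed inside the same space equipped with its weak topology. -/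
def wk {m0 : MeasurableSpace Ω} [NormedAddCommGroup X] [NormedSpace ℝ X]
    (μ : Measure Ω) (q : ℝ≥0∞) [Fact (1 ≤ q)] (S : Set (Lp X q μ)) :
    Set (WeakSpace ℝ (Lp X q μ)) :=
  toWeakSpace ℝ (Lp X q μ) '' S

/-- A set `S ⊆ Lp X q μ` is weakly compact if it is compact in the weak topology. -/
def WeaklyCompact {m0 : MeasurableSpace Ω} [NormedAddCommGroup X] [NormedSpace ℝ X]
    (μ : Measure Ω) (q : ℝ≥0∞) [Fact (1 ≤ q)] (S : Set (Lp X q μ)) : Prop :=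
  IsCompact (wk μ q S)

/-- `D = {D(τ) : τ ∈ ℝ}` is a family of nonempty bounded subsets of the spaces
`L^q(Ω, 𝓕_τ; X)`. -/
structure IsFamily {m0 : MeasurableSpace Ω} [NormedAddCommGroup X] [NormedSpace ℝ X]
    (μ : Measure Ω) (𝓕 : Filtration ℝ m0) (q : ℝ≥0∞) [Fact (1 ≤ q)]
    (D : ℝ → Set (Lp X q μ)) : Prop where
  nonempty : ∀ τ : ℝ, (D τ).Nonempty
  bounded : ∀ τ : ℝ, Bornology.IsBounded (D τ)
  adapted : ∀ τ : ℝ, D τ ⊆ measSet μ 𝓕 q τ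

/-- The collection `𝓓` is inclusion-closed: it contains every family of nonempty subsets of a
member of `𝓓`. -/
def InclusionClosed {m0 : MeasurableSpace Ω} [NormedAddCommGroup X] [NormedSpace ℝ X]
    {μ : Measure Ω} {q : ℝ≥0∞} (𝓓 : Set (ℝ → Set (Lp X q μ))) : Prop :=
  ∀ D ∈ 𝓓, ∀ D' : ℝ → Set (Lp X q μ), (∀ τ : ℝ, (D' τ).Nonempty ∧ D' τ ⊆ D τ) → D' ∈ 𝓓

/-- `φ` is a mean random dynamical system on `L^q(Ω, 𝓕; X)` over
`(Ω, 𝓕, {𝓕 τ}_{τ ∈ ℝ}, μ)`:  `φ t τ` maps `L^q(Ω, 𝓕_τ; X)` into `L^q(Ω, 𝓕_{t+τ}; X)`,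
`φ 0 τ` is the identity, and the cocycle property holds. -/
structure IsMRDS {m0 : MeasurableSpace Ω} [NormedAddCommGroup X] [NormedSpace ℝ X]
    (μ : Measure Ω) (𝓕 : Filtration ℝ m0) (q : ℝ≥0∞)
    (φ : ℝ → ℝ → Lp X q μ → Lp X q μ) : Prop where
  maps : ∀ t : ℝ, 0 ≤ t → ∀ τ : ℝ, ∀ u ∈ measSet μ 𝓕 q τ, φ t τ u ∈ measSet μ 𝓕 q (t + τ)
  id_eval : ∀ τ : ℝ, ∀ u ∈ measSet μ 𝓕 q τ, φ 0 τ u = u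
  cocycle : ∀ t : ℝ, 0 ≤ t → ∀ s : ℝ, 0 ≤ s → ∀ τ : ℝ, ∀ u ∈ measSet μ 𝓕 q τ,
    φ (t + s) τ u = φ t (τ + s) (φ s τ u)

/-- `K` is a `𝓓`-pullback absorbing set for `φ`:  for every `τ` and every `D ∈ 𝓓` there is
`T > 0` with `φ t (τ - t) '' D (τ - t) ⊆ K τ` for all `t ≥ T`. -/
def IsAbsorbing {m0 : MeasurableSpace Ω} [NormedAddCommGroup X] [NormedSpace ℝ X]
    {μ : Measure Ω} {q : ℝ≥0∞} (𝓓 : Set (ℝ → Set (Lp X q μ)))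
    (φ : ℝ → ℝ → Lp X q μ → Lp X q μ) (K : ℝ → Set (Lp X q μ)) : Prop :=
  ∀ τ : ℝ, ∀ D ∈ 𝓓, ∃ T > 0, ∀ t ≥ T, φ t (τ - t) '' D (τ - t) ⊆ K τ

/-- `K` is `𝓓`-pullback weakly attracting for `φ`: for every `τ`, every `D ∈ 𝓓` and every weak
neighborhood `N` of `K τ`, the pullback images `φ t (τ - t) '' D (τ - t)` eventually lie in `N`. -/
def IsWeaklyAttracting {m0 : MeasurableSpace Ω} [NormedAddCommGroup X] [NormedSpace ℝ X]
    {μ : Measure Ω} {q : ℝ≥0∞} [Fact (1 ≤ q)] (𝓓 : Set (ℝ → Set (Lp X q μ)))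
    (φ : ℝ → ℝ → Lp X q μ → Lp X q μ) (K : ℝ → Set (Lp X q μ)) : Prop :=
  ∀ τ : ℝ, ∀ D ∈ 𝓓, ∀ N : Set (WeakSpace ℝ (Lp X q μ)), N ∈ nhdsSet (wk μ q (K τ)) →
    ∃ T > 0, ∀ t ≥ T, wk μ q (φ t (τ - t) '' D (τ - t)) ⊆ N

/-- `A` is a weak `𝓓`-pullback mean random attractor for `φ`: it belongs to `𝓓`, each section
is weakly compact, it is `𝓓`-pullback weakly attracting, and it is minimal with these
properties. -/
structure IsWeakMeanAttractor {m0 : MeasurableSpace Ω} [NormedAddCommGroup X] [NormedSpace ℝ X]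
    {μ : Measure Ω} {q : ℝ≥0∞} [Fact (1 ≤ q)] (𝓓 : Set (ℝ → Set (Lp X q μ)))
    (φ : ℝ → ℝ → Lp X q μ → Lp X q μ) (A : ℝ → Set (Lp X q μ)) : Prop where
  mem : A ∈ 𝓓
  compact : ∀ τ : ℝ, WeaklyCompact μ q (A τ)
  attracts : IsWeaklyAttracting 𝓓 φ A
  minimal : ∀ C ∈ 𝓓, (∀ τ : ℝ, WeaklyCompact μ q (C τ)) → IsWeaklyAttracting 𝓓 φ C →
    ∀ τ : ℝ, A τ ⊆ C τ

/-- The pullback ω-limit set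
`𝓐(τ) = ⋂_{r ≥ 0} cl_w ( ⋃_{t ≥ r} φ(t, τ - t) (K (τ - t)) )`, where the closure is taken in
the weak topology of `L^q(Ω, 𝓕_τ; X)`. -/
def omegaLimit {m0 : MeasurableSpace Ω} [NormedAddCommGroup X] [NormedSpace ℝ X]
    (μ : Measure Ω) (q : ℝ≥0∞) [Fact (1 ≤ q)]
    (φ : ℝ → ℝ → Lp X q μ → Lp X q μ) (K : ℝ → Set (Lp X q μ)) (τ : ℝ) :
    Set (Lp X q μ) :=
  ⋂ r ∈ Ici (0 : ℝ),
    (⇑(toWeakSpace ℝ (Lp X q μ)) ⁻¹'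
      closure (wk μ q (⋃ t ∈ Ici r, φ t (τ - t) '' K (τ - t))))


/-- The weak topology on a real normed space is Hausdorff, since continuous linear
functionals separate points (Hahn–Banach). -/
lemma weakSpace_t2 (E : Type*) [NormedAddCommGroup E] [NormedSpace ℝ E] :
    T2Space (WeakSpace ℝ E) :=
  (WeakBilin.isEmbedding (separatingDual_iff_injective.mp inferInstance)).t2Space

/-- Minimality of the family of pullback ω-limit sets
`𝓐(τ) = ⋂_{r ≥ 0} cl_w (⋃_{t ≥ r} φ t (τ - t) '' K (τ - t))`: if `C ∈ 𝓓` is any family of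
weakly compact sets which is `𝓓`-pullback weakly attracting for `φ`, then `𝓐(τ) ⊆ C τ`
for every `τ`. -/
theorem omegaLimit_minimal
    {Ω X : Type*} {m0 : MeasurableSpace Ω}
    [NormedAddCommGroup X] [NormedSpace ℝ X] [CompleteSpace X]
    (hXrefl : Function.Surjective (NormedSpace.inclusionInDoubleDual ℝ X))
    (μ : Measure Ω) [IsProbabilityMeasure μ]
    (𝓕 : Filtration ℝ m0)
    (h𝓕right : ∀ τ : ℝ, 𝓕 τ = ⨅ (s : ℝ) (_ : τ < s), 𝓕 s)
    (h𝓕null : ∀ (τ : ℝ) (N : Set Ω), μ N = 0 → MeasurableSet[𝓕 τ] N)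
    (q : ℝ≥0∞) [Fact (1 ≤ q)] (hq1 : 1 < q) (hq2 : q ≠ ⊤)
    (𝓓 : Set (ℝ → Set (Lp X q μ)))
    (h𝓓 : ∀ D ∈ 𝓓, IsFamily μ 𝓕 q D)
    (h𝓓ic : InclusionClosed 𝓓)
    (φ : ℝ → ℝ → Lp X q μ → Lp X q μ)
    (hφ : IsMRDS μ 𝓕 q φ)
    (K : ℝ → Set (Lp X q μ)) (hK𝓓 : K ∈ 𝓓)
    (hKcpt : ∀ τ : ℝ, WeaklyCompact μ q (K τ))
    (hKabs : IsAbsorbing 𝓓 φ K) :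
    ∀ C ∈ 𝓓, (∀ τ : ℝ, WeaklyCompact μ q (C τ)) → IsWeaklyAttracting 𝓓 φ C →
      ∀ τ : ℝ, omegaLimit μ q φ K τ ⊆ C τ := by
  intro C hC𝓓 hCcpt hCatt τ x hx
  by_contra hxC
  haveI : T2Space (WeakSpace ℝ (Lp X q μ)) := weakSpace_t2 _
  have hpnot : toWeakSpace ℝ (Lp X q μ) x ∉ wk μ q (C τ) := by
    rintro ⟨y, hy, hyx⟩
    exact hxC (((toWeakSpace ℝ (Lp X q μ)).injective hyx) ▸ hy)
  obtain ⟨U, V, hUo, hVo, hCU, hpV, hUV⟩ :=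
    (hCcpt τ).separation_of_notMem hpnot
  obtain ⟨T, hT, hatt⟩ := hCatt τ K hK𝓓 U (hUo.mem_nhdsSet.mpr hCU)
  have hsub : wk μ q (⋃ t ∈ Ici T, φ t (τ - t) '' K (τ - t)) ⊆ U := by
    rintro _ ⟨y, hy, rfl⟩
    simp only [mem_iUnion, mem_Ici, exists_prop] at hy
    obtain ⟨t, ht, hyt⟩ := hy
    exact hatt t ht ⟨y, hyt, rfl⟩
  have hxcl : toWeakSpace ℝ (Lp X q μ) x ∈
      closure (wk μ q (⋃ t ∈ Ici T, φ t (τ - t) '' K (τ - t))) := by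
    simp only [omegaLimit, mem_iInter, mem_preimage, mem_Ici] at hx
    exact hx T hT.le
  have hU : toWeakSpace ℝ (Lp X q μ) x ∈ closure U := closure_mono hsub hxcl
  have hVc : closure U ⊆ Vᶜ :=
    closure_minimal (fun z hz hzV => hUV.le_bot ⟨hz, hzV⟩) hVo.isClosed_compl
  exact hVc hU hpV

end WeakMeanAttractor
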